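/- As the vaccination rate p tends to infinity, the basic reproduction number of the native strain R₁(p) tends to δ₁·R₁wv, and R₁(p) > δ₁·R₁wv for all p ≥ 0 (when δ₁ < 1). Consequently, if δ₁R₁wv > 1, then R₁(p) > 1 for every p ≥ 0, i.e., no amount of vaccination can bring R₁ below one. -/
import Mathlib


open Filter

/-- As `p → ∞`, `R₁(p) → δ₁ R₁wv`; `R₁(p) > δ₁ R₁wv` for all `p ≥ 0`; hence if
    `δ₁ R₁wv > 1`, no amount of vaccination brings `R₁` below one. -/
theorem R1_limit_vaccination (Λ β₁ a₁ μ γ d₁ α₁ ν₁ δ₁ : ℝ)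
    (hΛ : 0 < Λ) (hβ₁ : 0 < β₁) (ha₁ : 0 < a₁) (hμ : 0 < μ) (hγ : 0 < γ)
    (hd₁ : 0 < d₁) (hα₁ : 0 < α₁) (hν₁ : 0 < ν₁) (hδ₁0 : 0 ≤ δ₁) (hδ₁1 : δ₁ < 1)
    (R₁ : ℝ → ℝ) (R₁wv : ℝ)
    (hR₁ : ∀ p, R₁ p = Λ * β₁ * a₁ * (γ + μ + p * δ₁) /
      (μ * (μ + a₁) * (μ + d₁ + α₁ + ν₁) * (p + γ + μ)))
    (hR₁wv : R₁wv = Λ * β₁ * a₁ / (μ * (μ + a₁) * (μ + d₁ + α₁ + ν₁))) :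
    Filter.Tendsto R₁ Filter.atTop (nhds (δ₁ * R₁wv)) ∧
    (∀ p ≥ (0:ℝ), δ₁ * R₁wv < R₁ p) ∧
    (δ₁ * R₁wv > 1 → ∀ p ≥ (0:ℝ), 1 < R₁ p) := by
  set C := Λ * β₁ * a₁ with hC
  set D := μ * (μ + a₁) * (μ + d₁ + α₁ + ν₁) with hD
  have hCpos : 0 < C := by positivity
  have hDpos : 0 < D := by positivity
  have hlt : ∀ p ≥ (0:ℝ), δ₁ * R₁wv < R₁ p := by
    intro p hp
    have hden : 0 < p + γ + μ := by linarith
    rw [hR₁ p, hR₁wv, mul_div_assoc']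
    rw [div_lt_div_iff₀ hDpos (by positivity)]
    nlinarith [mul_pos (mul_pos hCpos hDpos)
      (mul_pos (by linarith : (0:ℝ) < γ + μ) (by linarith : (0:ℝ) < 1 - δ₁))]
  refine ⟨?_, hlt, fun h1 p hp => lt_trans h1 (hlt p hp)⟩
  have heq : ∀ᶠ p in atTop, R₁ p = δ₁ * R₁wv + (C * (γ + μ) * (1 - δ₁) / D) * (p + γ + μ)⁻¹ := by
    filter_upwards [eventually_ge_atTop (0:ℝ)] with p hp
    have hden : (0:ℝ) < p + γ + μ := by linarith
    rw [hR₁ p, hR₁wv]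
    field_simp
    ring
  have h0 : Tendsto (fun p : ℝ => δ₁ * R₁wv + (C * (γ + μ) * (1 - δ₁) / D) * (p + γ + μ)⁻¹)
      atTop (nhds (δ₁ * R₁wv + (C * (γ + μ) * (1 - δ₁) / D) * 0)) := by
    apply Tendsto.const_add
    apply Tendsto.const_mul
    exact Tendsto.inv_tendsto_atTop (tendsto_atTop_add_const_right _ _
      (tendsto_atTop_add_const_right _ _ tendsto_id))
  simpa using h0.congr' (heq.mono fun _ h => h.symm)
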